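/- Assume l0, l1, l2, l3 ∈ ℝ, ã_i ∈ {−l_i/2, (l_i+1)/2} for i = 0,1,2,3, N := −(ã0+ã1+ã2+ã3) ∈ ℤ_{≥0}, 2ã3 + 1/2 > 0, and −ã0 + ã1 + ã2 + ã3 + 1/2 > 0. Let e1 > e3 > e2 be real numbers with e1+e2+e3 = 0. Then the polynomial E ↦ c_{N+1}(E), which has degree N+1, has all of its N+1 roots real and unequal. -/

import Mathlib

open Polynomial
open Complex

lemma aux_deg (n : ℕ) (a b g : ℕ → ℝ) (c : ℕ → Polynomial ℝ)
    (hc0 : c 0 = 1)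
    (hc1 : c 1 = C (a 0) * X + C (b 0))
    (hrec : ∀ k, k + 2 ≤ n → c (k+2) = (C (a (k+1)) * X + C (b (k+1))) * c (k+1) + C (g (k+1)) * c k)
    (ha : ∀ k, k < n → 0 < a k) :
    ∀ k, k ≤ n → (c k).natDegree = k ∧ 0 < (c k).leadingCoeff := by
  intro k
  induction k using Nat.strong_induction_on with
  | _ k ih =>
    match k with
    | 0 => intro _; simp [hc0]
    | 1 =>
      intro h1
      have ha0 := ha 0 (by omega)
      rw [hc1]
      exact ⟨natDegree_linear (ne_of_gt ha0), by rwa [leadingCoeff_linear (ne_of_gt ha0)]⟩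
    | (k+2) =>
      intro hle
      obtain ⟨h1, h2⟩ := ih (k+1) (by omega) (by omega)
      obtain ⟨h0, _⟩ := ih k (by omega) (by omega)
      have hak := ha (k+1) (by omega)
      have hlin : (C (a (k+1)) * X + C (b (k+1))) ≠ 0 := by
        intro h
        have hld : (C (a (k+1)) * X + C (b (k+1))).leadingCoeff = a (k+1) :=
          leadingCoeff_linear (ne_of_gt hak)
        rw [h] at hld; simp at hld
        exact (ne_of_gt hak) hld.symm
      have hck1 : c (k+1) ≠ 0 := leadingCoeff_ne_zero.mp (ne_of_gt h2)
      have hA : ((C (a (k+1)) * X + C (b (k+1))) * c (k+1)).natDegree = k + 2 := by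
        rw [natDegree_mul hlin hck1, natDegree_linear (ne_of_gt hak), h1]; omega
      have hAne : (C (a (k+1)) * X + C (b (k+1))) * c (k+1) ≠ 0 := mul_ne_zero hlin hck1
      have hAd : ((C (a (k+1)) * X + C (b (k+1))) * c (k+1)).degree = ((k+2 : ℕ) : WithBot ℕ) := by
        rw [degree_eq_natDegree hAne, hA]
      have hBd : (C (g (k+1)) * c k).degree < ((C (a (k+1)) * X + C (b (k+1))) * c (k+1)).degree := by
        rw [hAd]
        calc (C (g (k+1)) * c k).degree ≤ (c k).degree := by
              calc (C (g (k+1)) * c k).degree ≤ (C (g (k+1))).degree + (c k).degree := degree_mul_le _ _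
                _ ≤ 0 + (c k).degree := add_le_add degree_C_le le_rfl
                _ = (c k).degree := by rw [zero_add]
          _ ≤ (k : ℕ) := degree_le_natDegree.trans (by rw [h0])
          _ < ((k+2 : ℕ) : WithBot ℕ) := by exact_mod_cast Nat.lt_succ_of_lt (Nat.lt_succ_self k)
      rw [hrec k hle, add_comm]
      constructor
      · rw [natDegree_add_eq_right_of_degree_lt hBd, hA]
      · rw [leadingCoeff_add_of_degree_lt hBd, leadingCoeff_mul, leadingCoeff_linear (ne_of_gt hak)]
        exact mul_pos hak h2

lemma aux_wron (n : ℕ) (a b g : ℕ → ℝ) (c : ℕ → Polynomial ℝ)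
    (hc0 : c 0 = 1)
    (hc1 : c 1 = C (a 0) * X + C (b 0))
    (hrec : ∀ k, k + 2 ≤ n → c (k+2) = (C (a (k+1)) * X + C (b (k+1))) * c (k+1) + C (g (k+1)) * c k)
    (ha : ∀ k, k < n → 0 < a k) (hg : ∀ k, 1 ≤ k → k < n → g k < 0) :
    ∀ k, k + 1 ≤ n → ∀ x : ℝ,
      0 < eval x (derivative (c (k+1)) * c k - c (k+1) * derivative (c k)) := by
  intro k
  induction k with
  | zero =>
    intro hle x
    have ha0 := ha 0 (by omega)
    simp [hc0, hc1]
    exact ha0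
  | succ k ihk =>
    intro hle x
    have ih := ihk (by omega) x
    have hak := ha (k+1) (by omega)
    have hgk := hg (k+1) (by omega) (by omega)
    have key : derivative (c (k+2)) * c (k+1) - c (k+2) * derivative (c (k+1))
        = C (a (k+1)) * (c (k+1))^2
          - C (g (k+1)) * (derivative (c (k+1)) * c k - c (k+1) * derivative (c k)) := by
      rw [hrec k hle]
      simp only [derivative_add, derivative_mul, derivative_C, derivative_X]
      ring
    rw [key]
    simp only [eval_sub, eval_mul, eval_pow, eval_C] at *
    nlinarith [sq_nonneg (eval x (c (k+1)))]

lemma aux_tele (n : ℕ) (a b g : ℕ → ℝ) (c : ℕ → Polynomial ℝ)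
    (hc0 : c 0 = 1)
    (hc1 : c 1 = C (a 0) * X + C (b 0))
    (hrec : ∀ k, k + 2 ≤ n → c (k+2) = (C (a (k+1)) * X + C (b (k+1))) * c (k+1) + C (g (k+1)) * c k)
    (ha : ∀ k, k < n → 0 < a k) (hg : ∀ k, 1 ≤ k → k < n → g k < 0) :
    ∀ k, k + 1 ≤ n → ∀ z : ℂ, ∃ s t : ℝ, 0 < s ∧ 0 < t ∧
      s * z.im = t * ((aeval z (c (k+1))) * (starRingEnd ℂ) (aeval z (c k))).im := by
  intro k
  induction k with
  | zero =>
    intro hle z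
    refine ⟨a 0, 1, ha 0 (by omega), one_pos, ?_⟩
    have h0 : aeval z (c 0) = 1 := by simp [hc0]
    have h1 : aeval z (c 1) = (a 0 : ℂ) * z + (b 0 : ℂ) := by
      simp [hc1]
    rw [h0, h1]
    simp [Complex.add_im, Complex.mul_im]
  | succ k ihk =>
    intro hle z
    obtain ⟨s, t, hs, ht, heq⟩ := ihk (by omega) z
    have hak := ha (k+1) (by omega)
    have hgk := hg (k+1) (by omega) (by omega)
    set u1 := aeval z (c k) with hu1
    set u2 := aeval z (c (k+1)) with hu2
    have h3 : aeval z (c (k+2))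
        = ((a (k+1) : ℂ) * z + (b (k+1) : ℂ)) * u2 + (g (k+1) : ℂ) * u1 := by
      rw [hrec k hle]
      simp [hu1, hu2]
    set t' : ℝ := -t / g (k+1) with ht'
    have ht'pos : 0 < t' := by
      rw [ht']
      exact div_pos_of_neg_of_neg (by linarith) hgk
    have htg : t' * g (k+1) = -t := by
      rw [ht']
      exact div_mul_cancel₀ _ (ne_of_lt hgk)
    refine ⟨s + t' * a (k+1) * Complex.normSq u2, t', add_pos_of_pos_of_nonneg hs (mul_nonneg (mul_nonneg ht'pos.le hak.le) (Complex.normSq_nonneg u2)), ht'pos, ?_⟩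
    rw [h3]
    simp only [Complex.add_im, Complex.add_re, Complex.mul_im, Complex.mul_re, Complex.ofReal_re,
      Complex.ofReal_im, Complex.conj_re, Complex.conj_im, Complex.normSq_apply] at heq ⊢
    linear_combination heq + (u1.re * u2.im - u1.im * u2.re) * htg

lemma aux_main (n : ℕ) (a b g : ℕ → ℝ) (c : ℕ → Polynomial ℝ) (hn : 1 ≤ n)
    (hc0 : c 0 = 1)
    (hc1 : c 1 = C (a 0) * X + C (b 0))
    (hrec : ∀ k, k + 2 ≤ n → c (k+2) = (C (a (k+1)) * X + C (b (k+1))) * c (k+1) + C (g (k+1)) * c k)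
    (ha : ∀ k, k < n → 0 < a k) (hg : ∀ k, 1 ≤ k → k < n → g k < 0) :
    (c n).degree = (n : WithBot ℕ) ∧ ∃ S : Finset ℝ, S.card = n ∧
      (∀ E ∈ S, (c n).IsRoot E) ∧ ∀ E : ℝ, (c n).IsRoot E → E ∈ S := by
  obtain ⟨hdeg, hlead⟩ := aux_deg n a b g c hc0 hc1 hrec ha n le_rfl
  have hne : c n ≠ 0 := leadingCoeff_ne_zero.mp (ne_of_gt hlead)
  have hdegree : (c n).degree = (n : WithBot ℕ) := by
    rw [degree_eq_natDegree hne, hdeg]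
  refine ⟨hdegree, ?_⟩
  -- complexification
  set P : Polynomial ℂ := (c n).map (algebraMap ℝ ℂ) with hP
  have hinj : Function.Injective (algebraMap ℝ ℂ) := (algebraMap ℝ ℂ).injective
  have hPne : P ≠ 0 := by
    rw [hP]
    exact (Polynomial.map_ne_zero_iff hinj).mpr hne
  have hPdeg : P.natDegree = n := by
    rw [hP, natDegree_map_eq_of_injective hinj, hdeg]
  -- every complex root is real
  obtain ⟨m, rfl⟩ : ∃ m, n = m + 1 := ⟨n - 1, by omega⟩
  have hreal : ∀ z : ℂ, P.eval z = 0 → z.im = 0 := by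
    intro z hz
    obtain ⟨s, t, hs, ht, heq⟩ := aux_tele (m+1) a b g c hc0 hc1 hrec ha hg m le_rfl z
    have hu : aeval z (c (m+1)) = 0 := by
      rw [aeval_def, ← eval_map]
      exact hz
    rw [hu, zero_mul] at heq
    simp at heq
    rcases heq with h | h
    · exact absurd h (ne_of_gt hs)
    · exact h
  -- derivative nonzero at real roots
  have hder : ∀ x : ℝ, (c (m+1)).IsRoot x → eval x (derivative (c (m+1))) ≠ 0 := by
    intro x hx
    have hw := aux_wron (m+1) a b g c hc0 hc1 hrec ha hg m le_rfl x
    simp only [eval_sub, eval_mul] at hw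
    rw [hx] at hw
    simp at hw
    intro h0
    rw [h0] at hw
    simp at hw
  -- roots over ℂ are simple
  have hcount : P.roots.Nodup := by
    rw [Multiset.nodup_iff_count_le_one]
    intro z
    rw [count_roots]
    by_contra hlt
    push_neg at hlt
    have h2 : 1 < P.rootMultiplicity z := hlt
    have hdz : (derivative^[1] P).IsRoot z := isRoot_iterate_derivative_of_lt_rootMultiplicity h2
    have hz0 : P.IsRoot z := by
      have : 0 < P.rootMultiplicity z := by omega
      exact (rootMultiplicity_pos hPne).mp this
    have him := hreal z hz0
    have hzeq : z = ((z.re : ℝ) : ℂ) := by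
      apply Complex.ext <;> simp [him]
    have hxroot : (c (m+1)).IsRoot z.re := by
      have : P.eval ((z.re : ℝ) : ℂ) = 0 := by rw [← hzeq]; exact hz0
      rw [hP, eval_map, ← Complex.coe_algebraMap, eval₂_at_apply] at this
      exact hinj (by simpa using this)
    have : eval z.re (derivative (c (m+1))) ≠ 0 := hder z.re hxroot
    apply this
    have : (derivative P).eval z = 0 := by simpa using hdz
    rw [hP, derivative_map] at this
    rw [hzeq] at this
    rw [eval_map, ← Complex.coe_algebraMap, eval₂_at_apply] at this
    exact hinj (by simpa using this)
  -- card of complex roots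
  have hcard : Multiset.card P.roots = m + 1 := by
    rw [← hPdeg]
    exact (splits_iff_card_roots.mp (IsAlgClosed.splits P))
  -- the real root finset
  refine ⟨(c (m+1)).roots.toFinset, ?_, ?_, ?_⟩
  · -- cardinality
    have himg : ((c (m+1)).roots.toFinset.image (fun x : ℝ => (x : ℂ))) = P.roots.toFinset := by
      ext z
      simp only [Finset.mem_image, Multiset.mem_toFinset]
      constructor
      · rintro ⟨x, hx, rfl⟩
        rw [mem_roots hne] at hx
        rw [mem_roots hPne]
        show P.eval _ = 0
        rw [hP, eval_map, ← Complex.coe_algebraMap, eval₂_at_apply]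
        simpa using hx
      · intro hz
        rw [mem_roots hPne] at hz
        have him := hreal z hz
        refine ⟨z.re, ?_, by apply Complex.ext <;> simp [him]⟩
        rw [mem_roots hne]
        have hze : z = ((z.re : ℝ) : ℂ) := by apply Complex.ext <;> simp [him]
        have : P.eval ((z.re : ℝ) : ℂ) = 0 := by rw [← hze]; exact hz
        rw [hP, eval_map, ← Complex.coe_algebraMap, eval₂_at_apply] at this
        exact hinj (by simpa using this)
    have hcards : (c (m+1)).roots.toFinset.card = P.roots.toFinset.card := by
      rw [← himg, Finset.card_image_of_injective _ Complex.ofReal_injective]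
    rw [hcards, Multiset.toFinset_card_of_nodup hcount, hcard]
  · intro E hE
    rwa [Multiset.mem_toFinset, mem_roots hne] at hE
  · intro E hE
    rwa [Multiset.mem_toFinset, mem_roots hne]


/-- For the elliptic form of Heun's equation with `ã_i ∈ {−l_i/2, (l_i+1)/2}`,
`N = −(ã0+ã1+ã2+ã3) ∈ ℤ_{≥0}`, `2ã3 + 1/2 > 0`, `−ã0+ã1+ã2+ã3+1/2 > 0`, and half-period
values `e1 > e3 > e2` with `e1+e2+e3 = 0`, the polynomial `c (N+1)` (of degree `N+1` in `E`)
has all of its `N+1` roots real and unequal. -/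
theorem elliptic_heun_real_distinct_roots
    (l0 l1 l2 l3 a0 a1 a2 a3 : ℝ)
    (ha0 : a0 = -l0 / 2 ∨ a0 = (l0 + 1) / 2)
    (ha1 : a1 = -l1 / 2 ∨ a1 = (l1 + 1) / 2)
    (ha2 : a2 = -l2 / 2 ∨ a2 = (l2 + 1) / 2)
    (ha3 : a3 = -l3 / 2 ∨ a3 = (l3 + 1) / 2)
    (N : ℕ) (hN : (N : ℝ) = -(a0 + a1 + a2 + a3))
    (hγ3 : 0 < 2 * a3 + 1 / 2)
    (hβ : 0 < -a0 + a1 + a2 + a3 + 1 / 2)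
    (e1 e2 e3 : ℝ) (h13 : e3 < e1) (h32 : e2 < e3) (hsum : e1 + e2 + e3 = 0)
    (qE : Polynomial ℝ)
    (hqE : qE = Polynomial.C (e1 * (a2 + a3) ^ 2 + e2 * (a1 + a3) ^ 2 + e3 * (a1 + a2) ^ 2
        - e3 * ((a0 + a1 + a2 + a3) * (-a0 + 1 / 2 + a1 + a2 + a3)))
      - Polynomial.C (1 / 4 : ℝ) * Polynomial.X)
    (c : ℕ → Polynomial ℝ)
    (hc0 : c 0 = 1)
    (hc1 : Polynomial.C ((e1 - e3) * (e2 - e3) * (2 * a3 + 1 / 2)) * c 1 = qE)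
    (hrec : ∀ m : ℕ,
      Polynomial.C ((e1 - e3) * (e2 - e3) * ((m : ℝ) + 2) * ((m : ℝ) + 1 + (2 * a3 + 1 / 2)))
          * c (m + 2)
        = Polynomial.C (-(((m : ℝ) + (a0 + a1 + a2 + a3))
              * ((m : ℝ) + (-a0 + 1 / 2 + a1 + a2 + a3)))) * c m
          + (Polynomial.C (((m : ℝ) + 1) * (((m : ℝ) + (2 * a3 + 1 / 2)) * (e1 + e2 - 2 * e3)
                + (e2 - e3) * (2 * a1 + 1 / 2) + (e1 - e3) * (2 * a2 + 1 / 2)))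
              + qE) * c (m + 1)) :
    (c (N + 1)).degree = ((N + 1 : ℕ) : WithBot ℕ) ∧
      ∃ S : Finset ℝ, S.card = N + 1 ∧ (∀ E ∈ S, (c (N + 1)).IsRoot E) ∧
        ∀ E : ℝ, (c (N + 1)).IsRoot E → E ∈ S := by
  set K : ℝ := (e1 - e3) * (e2 - e3) with hKdef
  set γ : ℝ := 2 * a3 + 1 / 2 with hγdef
  set q0 : ℝ := e1 * (a2 + a3) ^ 2 + e2 * (a1 + a3) ^ 2 + e3 * (a1 + a2) ^ 2
        - e3 * ((a0 + a1 + a2 + a3) * (-a0 + 1 / 2 + a1 + a2 + a3)) with hq0def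
  have hK : K < 0 := mul_neg_of_pos_of_neg (by linarith) (by linarith)
  set A : ℕ → ℝ := fun k => -(1/4) / (K * ((k:ℝ)+1) * ((k:ℝ)+γ)) with hAdef
  set B : ℕ → ℝ := fun k => if k = 0 then q0 / (K * γ)
      else (((k:ℝ)) * ((((k:ℝ)-1)+γ) * (e1 + e2 - 2*e3)
            + (e2 - e3) * (2*a1 + 1/2) + (e1 - e3) * (2*a2 + 1/2)) + q0)
        / (K * ((k:ℝ)+1) * ((k:ℝ)+γ)) with hBdef
  set G : ℕ → ℝ := fun k => (-((((k:ℝ)-1) + (a0+a1+a2+a3)) * (((k:ℝ)-1) + (-a0+1/2+a1+a2+a3))))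
        / (K * ((k:ℝ)+1) * ((k:ℝ)+γ)) with hGdef
  clear_value K γ q0 A B G
  have hDne : ∀ k : ℕ, K * ((k:ℝ)+2) * ((k:ℝ)+1+γ) ≠ 0 := by
    intro k
    have : K * ((k:ℝ)+2) * ((k:ℝ)+1+γ) < 0 :=
      mul_neg_of_neg_of_pos (mul_neg_of_neg_of_pos hK (by positivity)) (by positivity)
    exact ne_of_lt this
  have hD1ne : K * γ ≠ 0 := ne_of_lt (mul_neg_of_neg_of_pos hK hγ3)
  have hc1' : c 1 = C (A 0) * X + C (B 0) := by
    have h1 : c 1 = C ((K * γ)⁻¹) * qE := by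
      rw [← hc1, ← mul_assoc, ← C_mul, inv_mul_cancel₀ hD1ne, C_1, one_mul]
    have hA0 : A 0 = -((1/4) * (K * γ)⁻¹) := by
      simp only [hAdef]
      push_cast
      ring
    have hB0 : B 0 = q0 * (K * γ)⁻¹ := by
      simp only [hBdef, if_pos rfl]
      ring
    rw [h1, hqE, hA0, hB0]
    simp only [C_mul, C_neg]
    ring
  have hrec' : ∀ k, k + 2 ≤ N + 1 →
      c (k+2) = (C (A (k+1)) * X + C (B (k+1))) * c (k+1) + C (G (k+1)) * c k := by
    intro k _
    have h2 : c (k+2) = C ((K * ((k:ℝ)+2) * ((k:ℝ)+1+γ))⁻¹)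
        * (C (-(((k:ℝ) + (a0 + a1 + a2 + a3)) * ((k:ℝ) + (-a0 + 1 / 2 + a1 + a2 + a3)))) * c k
          + (C (((k:ℝ) + 1) * (((k:ℝ) + γ) * (e1 + e2 - 2 * e3)
              + (e2 - e3) * (2 * a1 + 1 / 2) + (e1 - e3) * (2 * a2 + 1 / 2))) + qE) * c (k+1)) := by
      rw [← hrec k, ← mul_assoc, ← C_mul, inv_mul_cancel₀ (hDne k), C_1, one_mul]
    have hAk : A (k+1) = -((1/4) * (K * ((k:ℝ)+2) * ((k:ℝ)+1+γ))⁻¹) := by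
      simp only [hAdef]
      push_cast
      ring
    have hBk : B (k+1) = (((k:ℝ) + 1) * (((k:ℝ) + γ) * (e1 + e2 - 2 * e3)
          + (e2 - e3) * (2 * a1 + 1 / 2) + (e1 - e3) * (2 * a2 + 1 / 2)))
        * (K * ((k:ℝ)+2) * ((k:ℝ)+1+γ))⁻¹
        + q0 * (K * ((k:ℝ)+2) * ((k:ℝ)+1+γ))⁻¹ := by
      simp only [hBdef, if_neg (Nat.succ_ne_zero k)]
      push_cast
      ring
    have hGk : G (k+1) = -((((k:ℝ) + (a0 + a1 + a2 + a3)) * ((k:ℝ) + (-a0 + 1 / 2 + a1 + a2 + a3)))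
        * (K * ((k:ℝ)+2) * ((k:ℝ)+1+γ))⁻¹) := by
      simp only [hGdef]
      push_cast
      ring
    rw [h2, hqE, hAk, hBk, hGk]
    simp only [C_mul, C_neg, map_add]
    ring
  have hApos : ∀ k, k < N + 1 → 0 < A k := by
    intro k _
    simp only [hAdef]
    have hden : K * ((k:ℝ)+1) * ((k:ℝ)+γ) < 0 :=
      mul_neg_of_neg_of_pos (mul_neg_of_neg_of_pos hK (by positivity)) (by positivity)
    have hnum : (-(1/4):ℝ) < 0 := by norm_num
    exact div_pos_of_neg_of_neg hnum hden
  have hGneg : ∀ k, 1 ≤ k → k < N + 1 → G k < 0 := by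
    intro k hk1 hkn
    simp only [hGdef]
    have hden : K * ((k:ℝ)+1) * ((k:ℝ)+γ) < 0 :=
      mul_neg_of_neg_of_pos (mul_neg_of_neg_of_pos hK (by positivity)) (by positivity)
    have hk1' : (1:ℝ) ≤ (k:ℝ) := by exact_mod_cast hk1
    have hkn' : (k:ℝ) ≤ (N:ℝ) := by exact_mod_cast Nat.lt_succ_iff.mp hkn
    have hnum : 0 < -((((k:ℝ)-1) + (a0+a1+a2+a3)) * (((k:ℝ)-1) + (-a0+1/2+a1+a2+a3))) := by
      have h1 : ((k:ℝ)-1) + (a0+a1+a2+a3) < 0 := by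
        have : a0+a1+a2+a3 = -(N:ℝ) := by linarith [hN]
        rw [this]
        linarith
      have h2 : 0 < ((k:ℝ)-1) + (-a0+1/2+a1+a2+a3) := by
        have : -a0+1/2+a1+a2+a3 = (-a0 + a1 + a2 + a3 + 1/2) := by ring
        rw [this]
        linarith
      nlinarith
    exact div_neg_of_pos_of_neg hnum hden
  exact aux_main (N+1) A B G c (by omega) hc0 hc1' hrec' hApos hGneg
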